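/- Let G be a subgroup of the symmetric group S_d that contains a d-cycle, a transposition, and a (d-1)-cycle. Then G = S_d. -/

import Mathlib

/-- Let `G` be a subgroup of the symmetric group `S_d` that contains a `d`-cycle,
a transposition, and a `(d-1)`-cycle. Then `G = S_d`. -/
theorem subgroup_eq_top_of_cycles_and_swap (d : ℕ) (G : Subgroup (Equiv.Perm (Fin d)))
    (σ τ ρ : Equiv.Perm (Fin d))
    (hσG : σ ∈ G) (hσ : σ.IsCycle) (hσd : σ.support.card = d)
    (hτG : τ ∈ G) (hτ : τ.IsSwap)
    (hρG : ρ ∈ G) (hρ : ρ.IsCycle) (hρd : ρ.support.card = d - 1) :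
    G = ⊤ := by
  classical
  obtain ⟨x0, y0, hxy0, hτeq⟩ := hτ
  rcases Nat.lt_or_ge d 2 with hd | hd
  · exact absurd (Fin.ext (by omega : (x0 : ℕ) = y0)) hxy0
  -- σ has full support
  have hσsup : σ.support = Finset.univ :=
    Finset.eq_univ_of_card _ (by simpa using hσd)
  have hσmove : ∀ x : Fin d, σ x ≠ x := fun x =>
    Equiv.Perm.mem_support.mp (hσsup ▸ Finset.mem_univ x)
  -- ρ has a unique fixed point f
  have hcompl : ρ.supportᶜ.card = 1 := by
    rw [Finset.card_compl, hρd]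
    simp only [Fintype.card_fin]
    omega
  obtain ⟨f, hf⟩ := Finset.card_eq_one.mp hcompl
  have hfρ : ρ f = f := by
    have : f ∈ ρ.supportᶜ := hf ▸ Finset.mem_singleton_self f
    simpa [Equiv.Perm.mem_support] using Finset.mem_compl.mp this
  -- main claim: every swap lies in G
  have key : ∀ i j : Fin d, i ≠ j → Equiv.swap i j ∈ G := by
    intro i j hij
    -- conjugate ρ to a (d-1)-cycle ρ' fixing exactly i
    obtain ⟨k, hk⟩ := hσ.exists_pow_eq (hσmove f) (hσmove i)
    set ρ' := σ ^ k * ρ * (σ ^ k)⁻¹ with hρ'def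
    have hρ'G : ρ' ∈ G := mul_mem (mul_mem (pow_mem hσG k) hρG) (inv_mem (pow_mem hσG k))
    have hρ'c : ρ'.IsCycle := hρ.conj
    have hρ'i : ρ' i = i := by
      have h1 : (σ ^ k)⁻¹ i = f := by rw [← hk]; exact Equiv.symm_apply_apply _ _
      simp [hρ'def, Equiv.Perm.mul_apply, h1, hfρ, hk]
    have hρ'card : ρ'.support.card = d - 1 := by
      rw [hρ'def, Equiv.Perm.card_support_conj, hρd]
    have hρ'supp : ∀ x : Fin d, x ≠ i → ρ' x ≠ x := by
      intro x hx
      have hcompl' : ρ'.supportᶜ.card = 1 := by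
        rw [Finset.card_compl, hρ'card]
        simp only [Fintype.card_fin]
        omega
      have hi : i ∈ ρ'.supportᶜ := by
        simp [Equiv.Perm.mem_support, hρ'i]
      have hset : ρ'.supportᶜ = {i} := by
        obtain ⟨z, hz⟩ := Finset.card_eq_one.mp hcompl'
        rw [hz] at hi ⊢
        rw [Finset.mem_singleton.mp hi]
      have hxmem : x ∈ ρ'.support := by
        by_contra hxm
        have hmem : x ∈ ρ'.supportᶜ := Finset.mem_compl.mpr hxm
        rw [hset] at hmem
        exact hx (Finset.mem_singleton.mp hmem)
      exact Equiv.Perm.mem_support.mp hxmem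
    -- move x0 to i with a power of σ
    obtain ⟨m, hm⟩ := hσ.exists_pow_eq (hσmove x0) (hσmove i)
    set b' := (σ ^ m) y0 with hb'def
    have hb'i : b' ≠ i := by
      rw [hb'def, ← hm]
      intro h
      exact hxy0 ((σ ^ m).injective h).symm
    obtain ⟨n, hn⟩ : ∃ n : ℕ, (ρ' ^ n) b' = j := by
      rcases eq_or_ne b' j with h | h
      · exact ⟨0, by simp [h]⟩
      · exact hρ'c.exists_pow_eq (hρ'supp b' hb'i) (hρ'supp j (Ne.symm hij))
    set g := ρ' ^ n * σ ^ m with hgdef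
    have hgG : g ∈ G := mul_mem (pow_mem hρ'G n) (pow_mem hσG m)
    have hgi : g x0 = i := by
      have hfix : (ρ' ^ n) i = i := Equiv.Perm.pow_apply_eq_self_of_apply_eq_self hρ'i n
      simp [hgdef, Equiv.Perm.mul_apply, hm, hfix]
    have hgj : g y0 = j := by simp [hgdef, Equiv.Perm.mul_apply, ← hb'def, hn]
    have : Equiv.swap i j = g * τ * g⁻¹ := by
      rw [hτeq, ← hgi, ← hgj, Equiv.swap_apply_apply]
    rw [this]
    exact mul_mem (mul_mem hgG hτG) (inv_mem hgG)
  rw [eq_top_iff, ← Equiv.Perm.closure_isSwap, Subgroup.closure_le]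
  rintro p ⟨i, j, hij, rfl⟩
  exact key i j hij
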